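/- Let v be a complete valuation on the downset lattice of a finite poset P with weight function w, and define the complementary strict order x ≺' y iff v(↓x) < v(↓y) and v'(↑x) < v'(↑y) and x ≠ y restricted to incomparable pairs (equivalently, x <₁ y in the first induced linear order and y <₂ x in the second). Then for every y ∈ P, w(y) = 1 + Σ_{x ≺' y} w(x). -/

import Mathlib

open Finset

variable (P : Type*) [PartialOrder P] [Fintype P] [DecidableEq P]

/-- The lattice of downsets (lower sets) of a finite poset `P`. -/
def DownSet : Type _ := {A : Finset P // IsLowerSet (↑A : Set P)}

variable {P}

instance : Lattice (DownSet P) :=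
  Subtype.lattice (fun _ _ hA hB => by simpa [Finset.sup_eq_union] using hA.union hB)
    (fun _ _ hA hB => by simpa [Finset.inf_eq_inter] using hA.inter hB)

instance : OrderBot (DownSet P) :=
  Subtype.orderBot (by simp [Finset.bot_eq_empty, isLowerSet_empty])

noncomputable instance : Fintype (DownSet P) :=
  Fintype.ofInjective Subtype.val Subtype.val_injective

/-- The valuation associated to a weight function `w`. -/
def vval (w : P → ℕ) (A : DownSet P) : ℕ := ∑ x ∈ A.1, w x

variable [DecidableRel ((· ≤ ·) : P → P → Prop)]

/-- The principal downset of `y`. -/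
def pd (y : P) : DownSet P :=
  ⟨univ.filter (· ≤ y), by
    intro a b hba ha
    simp only [coe_filter, Set.mem_setOf_eq, mem_univ, true_and] at *
    exact hba.trans ha⟩

/-- The dual valuation evaluated on the principal upset of `x`. -/
def vup (w : P → ℕ) (x : P) : ℕ := ∑ z ∈ univ.filter (fun z => x ≤ z), w z

/-- `T` is an initial segment for the valuation `v`. -/
def Initial (v : DownSet P → ℕ) (T : Set (DownSet P)) : Prop :=
  ∃ j, v '' T = {k | k < j}

/-- `T` is a final segment for the valuation `v`. -/
def Final (v : DownSet P → ℕ) (T : Set (DownSet P)) : Prop :=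
  ∃ j, v '' T = {k | j ≤ k ∧ k < Fintype.card (DownSet P)}

/-- The set of arbitrary (nonempty) joins of elements of `T`. -/
def joinSet (T : Set (DownSet P)) : Set (DownSet P) :=
  {a | ∃ S : Finset (DownSet P), ↑S ⊆ T ∧ ∃ hS : S.Nonempty, a = S.sup' hS id}

/-- The set of arbitrary (nonempty) meets of elements of `T`. -/
def meetSet (T : Set (DownSet P)) : Set (DownSet P) :=
  {a | ∃ S : Finset (DownSet P), ↑S ⊆ T ∧ ∃ hS : S.Nonempty, a = S.inf' hS id}

/-- A complete valuation: bijective onto `{0,…,|L|-1}`, join-closures of initial segments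
are initial segments, meet-closures of final segments are final segments. -/
def IsCompleteValuation (w : P → ℕ) : Prop :=
  Set.BijOn (vval w) Set.univ {k | k < Fintype.card (DownSet P)} ∧
  (∀ T, Initial (vval w) T → Initial (vval w) (joinSet T)) ∧
  (∀ T, Final (vval w) T → Final (vval w) (meetSet T))

/-- The complementary order from two linear orders: `x ≤' y` iff `le1 x y` and `le2 y x`. -/
def le'' (le1 le2 : P → P → Prop) (x y : P) : Prop := le1 x y ∧ le2 y x

/-- The number of chains (under the complementary order) with maximum element `y`. -/
noncomputable def chainCount (le1 le2 : P → P → Prop) (y : P) : ℕ :=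
  Set.ncard {C : Finset P | y ∈ C ∧ (∀ a ∈ C, le'' le1 le2 a y) ∧
    ∀ a ∈ C, ∀ b ∈ C, le'' le1 le2 a b ∨ le'' le1 le2 b a}

/-- `{le1, le2}` is a realizer of `P`. -/
def IsRealizer (le1 le2 : P → P → Prop) : Prop :=
  IsLinearOrder P le1 ∧ IsLinearOrder P le2 ∧ ∀ x y : P, x ≤ y ↔ le1 x y ∧ le2 x y

set_option linter.unusedSectionVars false
namespace Stmt6Aux

variable {P : Type*} [PartialOrder P] [Fintype P] [DecidableEq P]
variable [DecidableRel ((· ≤ ·) : P → P → Prop)]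

lemma le_iff {A B : DownSet P} : A ≤ B ↔ A.1 ⊆ B.1 := Iff.rfl

lemma mem_pd {z y : P} : z ∈ (pd y).1 ↔ z ≤ y := by
  simp [pd]

lemma vval_mono (w : P → ℕ) {A B : DownSet P} (hAB : A ≤ B) : vval w A ≤ vval w B :=
  Finset.sum_le_sum_of_subset hAB

variable {w : P → ℕ}

lemma vinj (h : IsCompleteValuation w) : Function.Injective (vval w : DownSet P → ℕ) := fun A B hab =>
  h.1.2.1 (Set.mem_univ A) (Set.mem_univ B) hab

lemma vval_lt_card (h : IsCompleteValuation w) (A : DownSet P) : vval w A < Fintype.card (DownSet P) :=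
  h.1.1 (Set.mem_univ A)

lemma vval_surj (h : IsCompleteValuation w) {k : ℕ} (hk : k < Fintype.card (DownSet P)) :
    ∃ A : DownSet P, vval w A = k := by
  obtain ⟨A, -, hA⟩ := h.1.2.2 hk
  exact ⟨A, hA⟩

lemma vval_strict_mono (h : IsCompleteValuation w) {A B : DownSet P} (hAB : A ≤ B) (hne : A ≠ B) :
    vval w A < vval w B :=
  lt_of_le_of_ne (vval_mono w hAB) (fun e => hne (vinj h e))

lemma wpos (h : IsCompleteValuation w) (x : P) : 1 ≤ w x := by
  rcases Nat.eq_zero_or_pos (w x) with h0 | h1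
  · exfalso
    set B : DownSet P := ⟨(pd x).1.erase x, by
      intro a b hba ha
      simp only [Finset.coe_erase, Set.mem_diff, Finset.mem_coe, mem_pd,
        Set.mem_singleton_iff] at ha ⊢
      refine ⟨hba.trans ha.1, ?_⟩
      rintro rfl
      exact ha.2 (le_antisymm ha.1 hba)⟩ with hB
    have hBle : B ≤ pd x := Finset.erase_subset _ _
    have hne : B ≠ pd x := by
      intro e
      have : x ∈ B.1 := e ▸ (mem_pd.2 le_rfl)
      exact (Finset.notMem_erase x _) this
    have hlt := vval_strict_mono h hBle hne
    have : vval w B + w x = vval w (pd x) := by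
      simpa [vval] using Finset.sum_erase_add (pd x).1 w (mem_pd.2 (le_refl x))
    omega
  · exact h1

lemma pd_mono {x y : P} (hxy : x ≤ y) : pd x ≤ pd y := by
  intro z hz
  exact mem_pd.2 ((mem_pd.1 hz).trans hxy)

lemma f_strict_mono (h : IsCompleteValuation w) {x y : P} (hxy : x < y) : vval w (pd x) < vval w (pd y) := by
  refine vval_strict_mono h (pd_mono hxy.le) ?_
  intro e
  have : y ∈ (pd x).1 := e ▸ (mem_pd.2 le_rfl)
  exact absurd (le_antisymm (mem_pd.1 this) hxy.le) hxy.ne'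

lemma pd_inj : Function.Injective (pd (P := P)) := by
  intro x y e
  have hx : x ∈ (pd y).1 := e ▸ (mem_pd.2 le_rfl)
  have hy : y ∈ (pd x).1 := e ▸ (mem_pd.2 le_rfl)
  exact le_antisymm (mem_pd.1 hx) (mem_pd.1 hy)

lemma finj (h : IsCompleteValuation w) {x y : P} (e : vval w (pd x) = vval w (pd y)) : x = y :=
  pd_inj (vinj h e)

/-- The complement of the principal upset, as a downset. -/
def Dp (y : P) : DownSet P :=
  ⟨univ.filter (fun z => ¬ y ≤ z), by
    intro a b hba ha
    simp only [coe_filter, Set.mem_setOf_eq, mem_univ, true_and] at *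
    exact fun hy => ha (hy.trans hba)⟩

lemma mem_Dp {z y : P} : z ∈ (Dp y).1 ↔ ¬ y ≤ z := by
  simp [Dp]

/-- The top downset. -/
def Dtop : DownSet P := ⟨univ, fun _ _ _ _ => Finset.mem_coe.2 (mem_univ _)⟩

lemma Dp_mono {x y : P} (hxy : x ≤ y) : Dp x ≤ Dp y := by
  intro z hz
  rw [mem_Dp] at hz ⊢
  exact fun hy => hz (hxy.trans hy)

lemma vval_Dp_add_vup (y : P) : vval w (Dp y) + vup w y = vval w Dtop := by
  simpa [vval, vup, Dp, Dtop] using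
    Finset.sum_filter_add_sum_filter_not univ (fun z => ¬ y ≤ z) w

lemma Dp_inj : Function.Injective (Dp (P := P)) := by
  intro x y e
  by_contra hne
  have hx : x ∉ (Dp x).1 := by simp [mem_Dp]
  have hy : y ∉ (Dp y).1 := by simp [mem_Dp]
  have h1 : y ≤ x := by
    by_contra hyx
    exact hx (e ▸ mem_Dp.2 hyx)
  have h2 : x ≤ y := by
    by_contra hxy
    exact hy (e.symm ▸ mem_Dp.2 hxy)
  exact hne (le_antisymm h2 h1)

lemma ginj (h : IsCompleteValuation w) {x y : P} (e : vup w x = vup w y) : x = y := by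
  have h1 := vval_Dp_add_vup (w := w) x
  have h2 := vval_Dp_add_vup (w := w) y
  have : vval w (Dp x) = vval w (Dp y) := by omega
  exact Dp_inj (vinj h this)

lemma g_strict_anti (h : IsCompleteValuation w) {x y : P} (hxy : x < y) : vup w y < vup w x := by
  have hlt : vval w (Dp x) < vval w (Dp y) := by
    refine vval_strict_mono h (Dp_mono hxy.le) ?_
    intro e
    have : x ∈ (Dp x).1 := e.symm ▸ (mem_Dp.2 (fun hyx => hxy.ne' (le_antisymm hyx hxy.le)))
    simp [mem_Dp] at this
  have h1 := vval_Dp_add_vup (w := w) x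
  have h2 := vval_Dp_add_vup (w := w) y
  omega

lemma f_pos (h : IsCompleteValuation w) (y : P) : 1 ≤ vval w (pd y) := by
  have := Finset.single_le_sum (f := w) (fun i _ => Nat.zero_le _) (mem_pd.2 (le_refl y))
  have := wpos h y
  simp only [vval]
  omega

lemma sumf (h : IsCompleteValuation w) (y : P) :
    (∑ z ∈ univ.filter (fun z => vval w (pd z) < vval w (pd y)), w z) + 1
      = vval w (pd y) := by
  classical
  set fy := vval w (pd y) with hfy
  set B : DownSet P := ⟨univ.filter (fun z => vval w (pd z) < fy), by
    intro a b hba ha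
    simp only [coe_filter, Set.mem_setOf_eq, mem_univ, true_and] at *
    exact lt_of_le_of_lt (vval_mono w (pd_mono hba)) ha⟩ with hB
  have hmemB : ∀ z : P, z ∈ B.1 ↔ vval w (pd z) < fy := by
    intro z; simp [hB]
  have hvB : vval w B = ∑ z ∈ univ.filter (fun z => vval w (pd z) < fy), w z := rfl
  set T : Set (DownSet P) := {A | vval w A < fy} with hT
  have hAB : ∀ A : DownSet P, vval w A < fy → A ≤ B := by
    intro A hA z hz
    have hpd : (pd z).1 ⊆ A.1 := by
      intro u hu
      exact Finset.mem_coe.1 (A.2 (mem_pd.1 hu) (Finset.mem_coe.2 hz))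
    exact (hmemB z).2 (lt_of_le_of_lt (Finset.sum_le_sum_of_subset hpd) hA)
  have hinit : Initial (vval w) T := by
    refine ⟨fy, ?_⟩
    ext k
    simp only [Set.mem_image, Set.mem_setOf_eq]
    constructor
    · rintro ⟨A, hA, rfl⟩; exact hA
    · intro hk
      obtain ⟨A, hA⟩ := vval_surj h (lt_trans hk (vval_lt_card h (pd y)))
      exact ⟨A, by simpa [hT, hA] using hk, hA⟩
  obtain ⟨j, hj⟩ := h.2.1 T hinit
  have himg : ∀ k, (∃ X ∈ joinSet T, vval w X = k) ↔ k < j := by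
    intro k
    have := Set.ext_iff.1 hj k
    simpa [Set.mem_image] using this
  have hjoin_le : ∀ X ∈ joinSet T, X ≤ B := by
    rintro X ⟨S, hST, hS, rfl⟩
    exact Finset.sup'_le _ _ fun A hA => hAB A (hST (Finset.mem_coe.2 hA))
  have hsingle : ∀ A : DownSet P, vval w A < fy → A ∈ joinSet T := by
    intro A hA
    exact ⟨{A}, by simpa [hT] using hA, Finset.singleton_nonempty A, by simp⟩
  have hBmem : B ∈ joinSet T := by
    set S : Finset (DownSet P) := Finset.univ.filter (fun A => vval w A < fy) with hSdef
    have hS : S.Nonempty := by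
      refine ⟨⟨∅, by simp [isLowerSet_empty]⟩, ?_⟩
      simp only [hSdef, Finset.mem_filter, Finset.mem_univ, true_and]
      have : vval w ⟨∅, by simp [isLowerSet_empty]⟩ = 0 := by simp [vval]
      refine Finset.mem_filter.2 ⟨Finset.mem_univ _, lt_of_eq_of_lt this ?_⟩
      exact lt_of_lt_of_le Nat.zero_lt_one (f_pos h y)
    have hBeq : B = S.sup' hS id := by
      apply le_antisymm
      · intro z hz
        have hfz := (hmemB z).1 hz
        have hpdS : pd z ∈ S := by simp [hSdef, hfz]
        have := Finset.le_sup' (f := id) hpdS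
        exact this (mem_pd.2 (le_refl z))
      · exact Finset.sup'_le _ _ fun A hA => hAB A (by simpa [hSdef] using hA)
    exact ⟨S, by intro A hA; simpa [hT] using (by simpa [hSdef] using (Finset.mem_coe.1 hA)),
      hS, hBeq⟩
  have hvBj : vval w B < j := (himg _).1 ⟨B, hBmem, rfl⟩
  have hfyj : fy ≤ j := by
    by_contra hc
    push_neg at hc
    obtain ⟨A, hA⟩ := vval_surj h (lt_trans hc (vval_lt_card h (pd y)))
    have : j < j := (himg j).1 ⟨A, hsingle A (hA ▸ hc), hA⟩
    omega
  have hjB : j ≤ vval w B + 1 := by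
    by_contra hc
    push_neg at hc
    obtain ⟨X, hX, hvX⟩ := (himg (vval w B + 1)).2 (by omega)
    have := vval_mono w (hjoin_le X hX)
    omega
  have hlt : vval w B < fy := by
    by_contra hc
    push_neg at hc
    obtain ⟨X, hX, hvX⟩ := (himg fy).2 (by omega)
    have hXpd : X = pd y := vinj h (by rw [hvX])
    have : y ∈ B.1 := hjoin_le X hX (hXpd ▸ mem_pd.2 (le_refl y))
    have := (hmemB y).1 this
    omega
  rw [← hvB]
  omega

lemma sumg (h : IsCompleteValuation w) (y : P) :
    (∑ z ∈ univ.filter (fun z => vval w (Dp z) ≤ vval w (Dp y)), w z)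
      = vval w (Dp y) + 1 := by
  classical
  set n := Fintype.card (DownSet P) with hn
  set dy := vval w (Dp y) with hdy
  set U : DownSet P := ⟨univ.filter (fun z => vval w (Dp z) ≤ dy), by
    intro a b hba ha
    simp only [coe_filter, Set.mem_setOf_eq, mem_univ, true_and] at *
    exact le_trans (vval_mono w (Dp_mono hba)) ha⟩ with hU
  have hmemU : ∀ z : P, z ∈ U.1 ↔ vval w (Dp z) ≤ dy := by
    intro z; simp [hU]
  have hvU : vval w U = ∑ z ∈ univ.filter (fun z => vval w (Dp z) ≤ dy), w z := rfl
  set F : Set (DownSet P) := {A | dy < vval w A} with hF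
  have hDtop_lt : dy < vval w Dtop := by
    refine vval_strict_mono h (fun z _ => mem_univ z) ?_
    intro e
    have : y ∈ (Dp y).1 := by
      rw [e]; exact mem_univ y
    simp [mem_Dp] at this
  have hDtop_card : vval w Dtop < n := vval_lt_card h Dtop
  have hfin : Final (vval w) F := by
    refine ⟨dy + 1, ?_⟩
    ext k
    simp only [Set.mem_image, Set.mem_setOf_eq]
    constructor
    · rintro ⟨A, hA, rfl⟩
      exact ⟨hA, vval_lt_card h A⟩
    · rintro ⟨hk1, hk2⟩
      obtain ⟨A, hA⟩ := vval_surj h hk2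
      refine ⟨A, ?_, hA⟩
      simp only [hF, Set.mem_setOf_eq]
      omega
  obtain ⟨j, hj⟩ := h.2.2 F hfin
  have himg : ∀ k, (∃ X ∈ meetSet F, vval w X = k) ↔ (j ≤ k ∧ k < n) := by
    intro k
    have := Set.ext_iff.1 hj k
    simpa [Set.mem_image] using this
  have hUA : ∀ A : DownSet P, dy < vval w A → U ≤ A := by
    intro A hA z hz
    have hz' := (hmemU z).1 hz
    by_contra hzA
    have hsub : A.1 ⊆ (Dp z).1 := by
      intro u hu
      refine mem_Dp.2 fun hzu => hzA ?_
      exact Finset.mem_coe.1 (A.2 hzu (Finset.mem_coe.2 hu))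
    have := Finset.sum_le_sum_of_subset (f := w) hsub
    have : vval w A ≤ vval w (Dp z) := this
    omega
  have hmeet_ge : ∀ X ∈ meetSet F, U ≤ X := by
    rintro X ⟨S, hST, hS, rfl⟩
    exact Finset.le_inf' _ _ fun A hA => hUA A (hST (Finset.mem_coe.2 hA))
  have hsingle : ∀ A : DownSet P, dy < vval w A → A ∈ meetSet F := by
    intro A hA
    exact ⟨{A}, by simpa [hF] using hA, Finset.singleton_nonempty A, by simp⟩
  have hUmem : U ∈ meetSet F := by
    set S : Finset (DownSet P) := Finset.univ.filter (fun A => dy < vval w A) with hSdef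
    have hS : S.Nonempty := ⟨Dtop, by simp [hSdef, hDtop_lt]⟩
    have hUeq : U = S.inf' hS id := by
      apply le_antisymm
      · exact Finset.le_inf' _ _ fun A hA => hUA A (by simpa [hSdef] using hA)
      · intro z hz
        refine (hmemU z).2 ?_
        by_contra hc
        push_neg at hc
        have hDS : Dp z ∈ S := by simp [hSdef, hc]
        have hle := Finset.inf'_le (f := id) hDS
        have : z ∈ (Dp z).1 := hle hz
        simp [mem_Dp] at this
    exact ⟨S, by intro A hA; simpa [hF] using (by simpa [hSdef] using (Finset.mem_coe.1 hA)),
      hS, hUeq⟩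
  obtain ⟨hjU, hUn⟩ := (himg _).1 ⟨U, hUmem, rfl⟩
  have hUj : vval w U ≤ j := by
    obtain ⟨X, hX, hvX⟩ := (himg j).2 ⟨le_refl j, by omega⟩
    have := vval_mono w (hmeet_ge X hX)
    omega
  have hjdy : j ≤ dy + 1 := by
    obtain ⟨A, hA⟩ := vval_surj h (show dy + 1 < n by omega)
    exact ((himg (dy + 1)).1 ⟨A, hsingle A (by omega), hA⟩).1
  have hlb : dy < vval w U := by
    by_contra hc
    push_neg at hc
    obtain ⟨X, hX, hvX⟩ := (himg dy).2 ⟨by omega, by omega⟩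
    have hXDp : X = Dp y := vinj h (by rw [hvX])
    have hyU : y ∈ U.1 := (hmemU y).2 (le_refl dy)
    have hUDp : U ≤ Dp y := hXDp ▸ hmeet_ge X hX
    have : y ∈ (Dp y).1 := hUDp hyU
    simp [mem_Dp] at this
  rw [← hvU]
  omega

lemma E1 (h : IsCompleteValuation w) (y : P) :
    (∑ z ∈ univ.filter (fun z => ¬ z ≤ y ∧ vval w (pd z) < vval w (pd y)), w z) + 1
      = w y := by
  classical
  have hsumf := sumf h y
  have hsplit := Finset.sum_filter_add_sum_filter_not
    (univ.filter (fun z => vval w (pd z) < vval w (pd y))) (fun z => z ≤ y) w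
  have e1 : (univ.filter (fun z => vval w (pd z) < vval w (pd y))).filter (fun z => z ≤ y)
      = (pd y).1.erase y := by
    ext z
    simp only [Finset.mem_filter, Finset.mem_erase, mem_univ, true_and, mem_pd]
    constructor
    · rintro ⟨hf, hle⟩
      refine ⟨fun e => ?_, hle⟩
      rw [e] at hf; omega
    · rintro ⟨hne, hle⟩
      exact ⟨f_strict_mono h (lt_of_le_of_ne hle hne), hle⟩
  have e2 : (univ.filter (fun z => vval w (pd z) < vval w (pd y))).filter (fun z => ¬ z ≤ y)
      = univ.filter (fun z => ¬ z ≤ y ∧ vval w (pd z) < vval w (pd y)) := by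
    ext z
    simp only [Finset.mem_filter, mem_univ, true_and]
    tauto
  have e3 : (∑ z ∈ (pd y).1.erase y, w z) + w y = vval w (pd y) := by
    simpa [vval] using Finset.sum_erase_add (pd y).1 w (mem_pd.2 (le_refl y))
  rw [e1, e2] at hsplit
  omega

lemma E2 (h : IsCompleteValuation w) (y : P) :
    (∑ z ∈ univ.filter (fun z => ¬ y ≤ z ∧ vup w z < vup w y), w z) + 1
      = w y := by
  classical
  have hsumg := sumg h y
  have htot : ∑ z ∈ (univ : Finset P), w z = vval w Dtop := rfl
  have hsplit0 := Finset.sum_filter_add_sum_filter_not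
    (univ : Finset P) (fun z => vval w (Dp z) ≤ vval w (Dp y)) w
  have e0 : univ.filter (fun z => ¬ vval w (Dp z) ≤ vval w (Dp y))
      = univ.filter (fun z => vup w z < vup w y) := by
    ext z
    have h1 := vval_Dp_add_vup (w := w) z
    have h2 := vval_Dp_add_vup (w := w) y
    simp only [Finset.mem_filter, mem_univ, true_and]
    omega
  rw [e0] at hsplit0
  have hy2 := vval_Dp_add_vup (w := w) y
  -- now: ∑_{vup<} + 1 = vup w y
  have hmain : (∑ z ∈ univ.filter (fun z => vup w z < vup w y), w z) + 1 = vup w y := by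
    omega
  have hsplit := Finset.sum_filter_add_sum_filter_not
    (univ.filter (fun z => vup w z < vup w y)) (fun z => y ≤ z) w
  have e1 : (univ.filter (fun z => vup w z < vup w y)).filter (fun z => y ≤ z)
      = (univ.filter (fun z => y ≤ z)).erase y := by
    ext z
    simp only [Finset.mem_filter, Finset.mem_erase, mem_univ, true_and]
    constructor
    · rintro ⟨hg, hle⟩
      refine ⟨fun e => ?_, hle⟩
      rw [e] at hg; omega
    · rintro ⟨hne, hle⟩
      exact ⟨g_strict_anti h (lt_of_le_of_ne hle (Ne.symm hne)), hle⟩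
  have e2 : (univ.filter (fun z => vup w z < vup w y)).filter (fun z => ¬ y ≤ z)
      = univ.filter (fun z => ¬ y ≤ z ∧ vup w z < vup w y) := by
    ext z
    simp only [Finset.mem_filter, mem_univ, true_and]
    tauto
  have e3 : (∑ z ∈ (univ.filter (fun z => y ≤ z)).erase y, w z) + w y = vup w y := by
    simpa [vup] using Finset.sum_erase_add (univ.filter (fun z => y ≤ z)) w
      (by simp : y ∈ univ.filter (fun z => y ≤ z))
  rw [e1, e2] at hsplit
  omega

lemma both (h : IsCompleteValuation w) (y : P) :
    univ.filter (fun z => ¬ z ≤ y ∧ vval w (pd z) < vval w (pd y))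
      = univ.filter (fun z => ¬ y ≤ z ∧ vup w z < vup w y) := by
  classical
  suffices H : ∀ N, ∀ y : P, vval w (pd y) ≤ N →
      univ.filter (fun z => ¬ z ≤ y ∧ vval w (pd z) < vval w (pd y))
        = univ.filter (fun z => ¬ y ≤ z ∧ vup w z < vup w y) by
    exact H _ y le_rfl
  intro N
  induction N with
  | zero =>
    intro y hy
    exact absurd hy (by have := f_pos h y; omega)
  | succ N ih =>
    intro y hy
    have hsub : univ.filter (fun z => ¬ z ≤ y ∧ vval w (pd z) < vval w (pd y))
        ⊆ univ.filter (fun z => ¬ y ≤ z ∧ vup w z < vup w y) := by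
      intro z hz
      simp only [Finset.mem_filter, mem_univ, true_and] at hz ⊢
      obtain ⟨hzy, hfz⟩ := hz
      have hne : z ≠ y := fun e => hzy (e ▸ le_refl z)
      have hyz : ¬ y ≤ z := by
        intro hyz
        have hlt : y < z := lt_of_le_of_ne hyz (Ne.symm hne)
        have := f_strict_mono h hlt
        omega
      refine ⟨hyz, ?_⟩
      by_contra hg
      push_neg at hg
      have hgn : vup w y < vup w z := lt_of_le_of_ne hg (fun e => hne (ginj h e.symm))
      have hz' := ih z (by omega)
      have hyB : y ∈ univ.filter (fun x => ¬ z ≤ x ∧ vup w x < vup w z) := by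
        simp only [Finset.mem_filter, mem_univ, true_and]
        exact ⟨hzy, hgn⟩
      rw [← hz'] at hyB
      simp only [Finset.mem_filter, mem_univ, true_and] at hyB
      omega
    have hA := E1 h y
    have hB := E2 h y
    refine Finset.Subset.antisymm hsub ?_
    have hd := Finset.sum_sdiff (f := w) hsub
    intro z hzB
    by_contra hzA
    have hzd : z ∈ univ.filter (fun z => ¬ y ≤ z ∧ vup w z < vup w y)
        \ univ.filter (fun z => ¬ z ≤ y ∧ vval w (pd z) < vval w (pd y)) :=
      Finset.mem_sdiff.2 ⟨hzB, hzA⟩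
    have h1 := Finset.single_le_sum (f := w) (fun i _ => Nat.zero_le _) hzd
    have h2 := wpos h z
    omega

end Stmt6Aux

/-- For a complete valuation: `w(y) = 1 + Σ_{x ≺' y} w(x)`, where `x ≺' y` iff
`v(↓x) < v(↓y)` and `v'(↑x) < v'(↑y)`. -/
theorem stmt6 (w : P → ℕ) (h : IsCompleteValuation w) (y : P) :
    w y = 1 + ∑ x ∈ univ.filter
      (fun x => vval w (pd x) < vval w (pd y) ∧ vup w x < vup w y), w x := by
  classical
  have hAB := Stmt6Aux.both h y
  have key : univ.filter
      (fun x => vval w (pd x) < vval w (pd y) ∧ vup w x < vup w y)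
      = univ.filter (fun z => ¬ z ≤ y ∧ vval w (pd z) < vval w (pd y)) := by
    ext x
    simp only [Finset.mem_filter, mem_univ, true_and]
    constructor
    · rintro ⟨hf, hg⟩
      refine ⟨?_, hf⟩
      intro hxy
      have hne : x ≠ y := fun e => by rw [e] at hf; omega
      have := Stmt6Aux.g_strict_anti h (lt_of_le_of_ne hxy hne)
      omega
    · intro hx
      have hx' : x ∈ univ.filter (fun z => ¬ y ≤ z ∧ vup w z < vup w y) :=
        hAB ▸ (Finset.mem_filter.2 ⟨mem_univ x, hx⟩)
      exact ⟨hx.2, (Finset.mem_filter.1 hx').2.2⟩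
  rw [key]
  have := Stmt6Aux.E1 h y
  omega
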